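/- Fix x_t ∈ X (the capped simplex with integer capacity k) with all coordinates positive, a gradient g ≥ 0 (coordinatewise), and intermediate point y with y_i = x_{t,i} e^{η g_i} ≥ x_{t,i} for all i (so ‖y‖₁ ≥ k). Let x_{t+1} be the Bregman projection of y onto X under the neg-entropy mirror map. Then for every coordinate i with g_i = 0, x_{t+1,i} ≤ x_{t,i}. -/

import Mathlib

set_option maxHeartbeats 1000000

lemma sum_pair_of_vanish {N : ℕ} (i j : Fin N) (hij : i ≠ j) (d : Fin N → ℝ)
    (h : ∀ m, m ≠ i → m ≠ j → d m = 0) : ∑ m, d m = d i + d j := by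
  rw [← Finset.sum_pair hij]
  refine (Finset.sum_subset (Finset.subset_univ _) ?_).symm
  intro m _ hm
  simp only [Finset.mem_insert, Finset.mem_singleton, not_or] at hm
  exact h m hm.1 hm.2

lemma ent_up (a ε : ℝ) (ha : 0 < a) (hε : 0 < ε) :
    (a + ε) * Real.log (a + ε) - a * Real.log a ≤ ε * (1 + Real.log (a + ε)) := by
  have hae : 0 < a + ε := by linarith
  have h1 : Real.log (a + ε) - Real.log a ≤ ε / a := by
    have := Real.log_le_sub_one_of_pos (x := (a + ε) / a) (by positivity)
    rw [Real.log_div (by positivity) (ne_of_gt ha)] at this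
    calc Real.log (a+ε) - Real.log a ≤ (a+ε)/a - 1 := this
      _ = ε / a := by field_simp; ring
  have h2 : a * (Real.log (a + ε) - Real.log a) ≤ ε := by
    calc a * (Real.log (a+ε) - Real.log a) ≤ a * (ε / a) := by
          exact mul_le_mul_of_nonneg_left h1 ha.le
      _ = ε := by field_simp
  nlinarith [h2]

lemma ent_down (b ε : ℝ) (hb : 0 < b - ε) (hε : 0 < ε) :
    (b - ε) * Real.log (b - ε) - b * Real.log b ≤ -ε * (1 + Real.log (b - ε)) := by
  have hbpos : 0 < b := by linarith
  have h1 : Real.log (b - ε) - Real.log b ≤ -ε / b := by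
    have := Real.log_le_sub_one_of_pos (x := (b - ε) / b) (by positivity)
    rw [Real.log_div (ne_of_gt hb) (ne_of_gt hbpos)] at this
    calc Real.log (b-ε) - Real.log b ≤ (b-ε)/b - 1 := this
      _ = -ε / b := by field_simp; ring
  have h2 : b * (Real.log (b - ε) - Real.log b) ≤ -ε := by
    calc b * (Real.log (b-ε) - Real.log b) ≤ b * (-ε / b) := by
          exact mul_le_mul_of_nonneg_left h1 hbpos.le
      _ = -ε := by field_simp
  nlinarith [h2]

theorem stmt16 (N k : ℕ) (hk : 1 ≤ k) (hkN : k ≤ N)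
    (x y xnext g : Fin N → ℝ) (η : ℝ) (hη : 0 ≤ η) (hg : ∀ i, 0 ≤ g i)
    (hxX : (∀ i, x i ∈ Set.Icc (0 : ℝ) 1) ∧ ∑ i, x i = k) (hxpos : ∀ i, 0 < x i)
    (hy : ∀ i, y i = x i * Real.exp (η * g i))
    (hxnext : xnext ∈ ({z : Fin N → ℝ | (∀ i, z i ∈ Set.Icc (0 : ℝ) 1) ∧ ∑ i, z i = k}
        ∩ {z | ∀ i, 0 < z i}))
    (hproj : IsMinOn
      (fun z : Fin N → ℝ =>
        (∑ i, z i * Real.log (z i)) - (∑ i, y i * Real.log (y i)) -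
          ∑ i, (1 + Real.log (y i)) * (z i - y i))
      ({z : Fin N → ℝ | (∀ i, z i ∈ Set.Icc (0 : ℝ) 1) ∧ ∑ i, z i = k}
        ∩ {z | ∀ i, 0 < z i}) xnext) :
    ∀ i, g i = 0 → xnext i ≤ x i := by
  intro i hgi
  by_contra hcon
  push_neg at hcon
  obtain ⟨⟨hnIcc, hnsum⟩, hnpos'⟩ := hxnext
  have hnpos : ∀ m, 0 < xnext m := hnpos'
  have hypos : ∀ m, 0 < y m := fun m => by
    rw [hy m]; exact mul_pos (hxpos m) (Real.exp_pos _)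
  have hyx : ∀ m, x m ≤ y m := fun m => by
    rw [hy m]
    nlinarith [Real.one_le_exp (mul_nonneg hη (hg m)), (hxpos m)]
  have hyi : y i = x i := by rw [hy i, hgi]; simp
  -- find j
  have hexj : ∃ j, xnext j < 1 ∧ xnext j * y i < xnext i * y j := by
    by_contra hno
    push_neg at hno
    have hle : ∀ m, x m ≤ xnext m := by
      intro m
      rcases lt_or_ge (xnext m) 1 with hm | hm
      · have h1 := hno m hm
        have h2 : y m * y i < xnext m * y i := by
          calc y m * y i = y i * y m := by ring
            _ < xnext i * y m := by
                apply mul_lt_mul_of_pos_right _ (hypos m); rw [hyi]; exact hcon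
            _ ≤ xnext m * y i := h1
        have := lt_of_mul_lt_mul_right h2 (hypos i).le
        linarith [hyx m]
      · linarith [(hxX.1 m).2]
    have : ∑ m, x m < ∑ m, xnext m :=
      Finset.sum_lt_sum (fun m _ => hle m) ⟨i, Finset.mem_univ i, by linarith [hyx i]⟩
    rw [hxX.2, hnsum] at this; exact lt_irrefl _ this
  obtain ⟨j, hj1, hjlt⟩ := hexj
  have hij : j ≠ i := by
    intro h; rw [h] at hjlt; exact lt_irrefl _ hjlt
  -- choose ε
  set c : ℝ := xnext i * y j - xnext j * y i with hc
  have hcpos : 0 < c := by simp [hc]; linarith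
  have hyij : 0 < y i + y j := by linarith [hypos i, hypos j]
  set ε : ℝ := min (min (xnext i / 2) ((1 - xnext j) / 2)) (c / (2 * (y i + y j))) with hε
  have hεpos : 0 < ε := by
    apply lt_min (lt_min (by linarith [hnpos i]) (by linarith)) (div_pos hcpos (by linarith))
  have hεi : ε < xnext i := by
    have : ε ≤ xnext i / 2 := le_trans (min_le_left _ _) (min_le_left _ _)
    linarith [hnpos i]
  have hεj : xnext j + ε < 1 := by
    have : ε ≤ (1 - xnext j) / 2 := le_trans (min_le_left _ _) (min_le_right _ _)
    linarith
  have hεc : ε * (y i + y j) < c := by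
    have h1 : ε ≤ c / (2 * (y i + y j)) := min_le_right _ _
    have h2 : ε * (2 * (y i + y j)) ≤ c :=
      (le_div_iff₀ (show (0:ℝ) < 2 * (y i + y j) by linarith)).mp h1
    nlinarith [mul_pos hεpos hyij]
  -- define perturbed point
  set z : Fin N → ℝ := fun m => if m = i then xnext i - ε else if m = j then xnext j + ε else xnext m with hz
  have hzi : z i = xnext i - ε := by simp [hz]
  have hzj : z j = xnext j + ε := by simp [hz, hij]
  have hzm : ∀ m, m ≠ i → m ≠ j → z m = xnext m := fun m h1 h2 => by simp [hz, h1, h2]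
  have hzpos : ∀ m, 0 < z m := by
    intro m
    rcases eq_or_ne m i with rfl | h1
    · rw [hzi]; linarith
    rcases eq_or_ne m j with rfl | h2
    · rw [hzj]; linarith [hnpos m, hεpos]
    · rw [hzm m h1 h2]; exact hnpos m
  have hzIcc : ∀ m, z m ∈ Set.Icc (0:ℝ) 1 := by
    intro m
    refine ⟨(hzpos m).le, ?_⟩
    rcases eq_or_ne m i with rfl | h1
    · rw [hzi]; linarith [(hnIcc m).2, hεpos]
    rcases eq_or_ne m j with rfl | h2
    · rw [hzj]; linarith
    · rw [hzm m h1 h2]; exact (hnIcc m).2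
  have hzsum : ∑ m, z m = k := by
    have hd : ∑ m, (z m - xnext m) = (z i - xnext i) + (z j - xnext j) := by
      apply sum_pair_of_vanish i j (Ne.symm hij)
      intro m h1 h2; rw [hzm m h1 h2]; ring
    have : ∑ m, (z m - xnext m) = 0 := by rw [hd, hzi, hzj]; ring
    rw [Finset.sum_sub_distrib] at this
    linarith [hnsum]
  have hzmem : z ∈ ({w : Fin N → ℝ | (∀ m, w m ∈ Set.Icc (0 : ℝ) 1) ∧ ∑ m, w m = k}
        ∩ {w | ∀ m, 0 < w m}) := ⟨⟨hzIcc, hzsum⟩, hzpos⟩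
  have hmin := isMinOn_iff.mp hproj z hzmem
  -- compute difference
  have hdiff : (∑ m, z m * Real.log (z m)) - (∑ m, xnext m * Real.log (xnext m))
      - ∑ m, (1 + Real.log (y m)) * (z m - xnext m)
      = (z i * Real.log (z i) - xnext i * Real.log (xnext i) - (1 + Real.log (y i)) * (z i - xnext i))
      + (z j * Real.log (z j) - xnext j * Real.log (xnext j) - (1 + Real.log (y j)) * (z j - xnext j)) := by
    rw [← Finset.sum_sub_distrib, ← Finset.sum_sub_distrib]
    apply sum_pair_of_vanish i j (Ne.symm hij)
    intro m h1 h2; rw [hzm m h1 h2]; ring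
  have hA : z i * Real.log (z i) - xnext i * Real.log (xnext i)
      ≤ -ε * (1 + Real.log (xnext i - ε)) := by
    rw [hzi]; exact ent_down _ _ (by linarith) hεpos
  have hB : z j * Real.log (z j) - xnext j * Real.log (xnext j)
      ≤ ε * (1 + Real.log (xnext j + ε)) := by
    rw [hzj]; exact ent_up _ _ (hnpos j) hεpos
  have hlog : Real.log (xnext j + ε) + Real.log (y i) < Real.log (xnext i - ε) + Real.log (y j) := by
    rw [← Real.log_mul (by nlinarith [hnpos j]) (ne_of_gt (hypos i)),
        ← Real.log_mul (by nlinarith [hnpos i]) (ne_of_gt (hypos j))]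
    apply Real.log_lt_log (mul_pos (by nlinarith [hnpos j]) (hypos i))
    nlinarith
  have hkey : (∑ m, z m * Real.log (z m)) - (∑ m, xnext m * Real.log (xnext m))
      - ∑ m, (1 + Real.log (y m)) * (z m - xnext m) < 0 := by
    rw [hzi] at hA
    rw [hzj] at hB
    rw [hdiff, hzi, hzj]
    nlinarith [hA, hB, mul_lt_mul_of_pos_left hlog hεpos]
  -- contradiction with hmin
  have : (∑ m, xnext m * Real.log (xnext m)) - (∑ m, y m * Real.log (y m)) -
      ∑ m, (1 + Real.log (y m)) * (xnext m - y m)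
      ≤ (∑ m, z m * Real.log (z m)) - (∑ m, y m * Real.log (y m)) -
      ∑ m, (1 + Real.log (y m)) * (z m - y m) := hmin
  have hsplit : ∑ m, (1 + Real.log (y m)) * (z m - y m)
      = ∑ m, (1 + Real.log (y m)) * (z m - xnext m) + ∑ m, (1 + Real.log (y m)) * (xnext m - y m) := by
    rw [← Finset.sum_add_distrib]; congr 1; ext m; ring
  rw [hsplit] at this
  linarith [hkey, this]
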